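/- arXiv:math/0208189 — 5 statements merged into one kernel-verified Lean document; each statement's English description precedes it below -/
import Mathlib

section
/- For every endomorphism φ of a finitely generated free group F, there exists k > 0 such that ker(φ^k) = ker(φ^n) for all n ≥ k. -/
namespace KStab
open FreeGroup Function

variable {β : Type} [DecidableEq β]

/-- no cancellation at adjacent positions -/
def NC (v : List (β × Bool)) : Prop :=
  ∀ (i : ℕ) (a : β) (b : Bool), ¬(v[i]? = some (a, b) ∧ v[i+1]? = some (a, !b))

lemma nc_reverse_toWord (x : FreeGroup β) : NC (x.toWord).reverse := by
  rintro i a b ⟨h1, h2⟩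
  set v := (x.toWord).reverse with hvdef
  have h2' : i + 1 < v.length := (List.getElem?_eq_some_iff.mp h2).1
  have h1' : i < v.length := by omega
  have e1 : v[i] = (a, b) := by
    have := List.getElem?_eq_getElem h1'
    rw [h1] at this; exact (Option.some.inj this).symm
  have e2 : v[i+1] = (a, !b) := by
    have := List.getElem?_eq_getElem h2'
    rw [h2] at this; exact (Option.some.inj this).symm
  have hsplit : v = v.take i ++ (a, b) :: (a, !b) :: v.drop (i+2) := by
    conv_lhs => rw [← List.take_append_drop i v]
    rw [List.drop_eq_getElem_cons h1', List.drop_eq_getElem_cons h2', e1, e2]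
  have hw : x.toWord = (v.drop (i+2)).reverse ++ (a, !b) :: (a, !(!b)) :: (v.take i).reverse := by
    rw [← List.reverse_reverse x.toWord, ← hvdef]
    conv_lhs => rw [hsplit]
    simp
  exact @FreeGroup.reduce.not β _ False _ _ _ a (!b) (by rw [FreeGroup.reduce_toWord, hw])

variable (v : List (β × Bool)) (a : β)

def Sp (p : Fin (v.length + 1)) : Prop :=
  v[(p:ℕ)]? = some (a, true) ∨ ((p:ℕ) ≠ 0 ∧ v[(p:ℕ)-1]? = some (a, false))

def Tp (p : Fin (v.length + 1)) : Prop :=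
  ((p:ℕ) ≠ 0 ∧ v[(p:ℕ)-1]? = some (a, true)) ∨ v[(p:ℕ)]? = some (a, false)

instance : DecidablePred (Sp v a) := fun _ => by unfold Sp; infer_instance
instance : DecidablePred (Tp v a) := fun _ => by unfold Tp; infer_instance

variable {v}

def fwd (x : {p // Sp v a p}) : {p // Tp v a p} :=
  if h : v[(x.1:ℕ)]? = some (a, true) then
    ⟨⟨(x.1:ℕ)+1, by have := (List.getElem?_eq_some_iff.mp h).1; omega⟩,
      Or.inl ⟨Nat.succ_ne_zero _, by simp only [Nat.add_sub_cancel]; exact h⟩⟩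
  else
    ⟨⟨(x.1:ℕ)-1, by omega⟩, Or.inr ((x.2.resolve_left h).2)⟩

def bwd (x : {p // Tp v a p}) : {p // Sp v a p} :=
  if h : (x.1:ℕ) ≠ 0 ∧ v[(x.1:ℕ)-1]? = some (a, true) then
    ⟨⟨(x.1:ℕ)-1, by omega⟩, Or.inl h.2⟩
  else
    ⟨⟨(x.1:ℕ)+1, by have := (List.getElem?_eq_some_iff.mp (x.2.resolve_left h)).1; omega⟩,
      Or.inr ⟨Nat.succ_ne_zero _, by simp only [Nat.add_sub_cancel]; exact x.2.resolve_left h⟩⟩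

lemma fwd_val (x : {p // Sp v a p}) :
    ((fwd a x).1 : ℕ) = if v[(x.1:ℕ)]? = some (a, true) then (x.1:ℕ)+1 else (x.1:ℕ)-1 := by
  unfold fwd
  by_cases h : v[(x.1:ℕ)]? = some (a, true) <;> simp [h]

lemma bwd_val (x : {p // Tp v a p}) :
    ((bwd a x).1 : ℕ) = if (x.1:ℕ) ≠ 0 ∧ v[(x.1:ℕ)-1]? = some (a, true) then (x.1:ℕ)-1
      else (x.1:ℕ)+1 := by
  unfold bwd
  by_cases h : (x.1:ℕ) ≠ 0 ∧ v[(x.1:ℕ)-1]? = some (a, true) <;> simp only [ne_eq] at h ⊢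
  · rw [dif_pos h, if_pos h]
  · rw [dif_neg h, if_neg h]

lemma bwd_fwd (hv : NC v) (x : {p // Sp v a p}) : bwd a (fwd a x) = x := by
  apply Subtype.ext; apply Fin.ext
  simp only [bwd_val, fwd_val]
  by_cases h : v[(x.1:ℕ)]? = some (a, true)
  · rw [if_pos h, if_pos ⟨Nat.succ_ne_zero _, by simp only [Nat.add_sub_cancel]; exact h⟩]
    omega
  · rw [if_neg h]
    have hp2 := x.2.resolve_left h
    have hnc : ¬((x.1:ℕ)-1 ≠ 0 ∧ v[(x.1:ℕ)-1-1]? = some (a, true)) := by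
      rintro ⟨hne, htrue⟩
      refine hv ((x.1:ℕ)-1-1) a true ⟨htrue, ?_⟩
      have : (x.1:ℕ)-1-1+1 = (x.1:ℕ)-1 := by omega
      rw [this]; exact hp2.2
    rw [if_neg hnc]
    omega

lemma fwd_bwd (hv : NC v) (x : {p // Tp v a p}) : fwd a (bwd a x) = x := by
  apply Subtype.ext; apply Fin.ext
  simp only [bwd_val, fwd_val]
  by_cases h : (x.1:ℕ) ≠ 0 ∧ v[(x.1:ℕ)-1]? = some (a, true)
  · rw [if_pos h, if_pos h.2]
    omega
  · rw [if_neg h]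
    have hp2 := x.2.resolve_left h
    have hnc : ¬(v[(x.1:ℕ)+1]? = some (a, true)) := by
      intro htrue
      exact hv (x.1:ℕ) a false ⟨hp2, htrue⟩
    rw [if_neg hnc]
    omega

def eST (hv : NC v) : {p // Sp v a p} ≃ {p // Tp v a p} :=
  ⟨fwd a, bwd a, bwd_fwd a hv, fwd_bwd a hv⟩

lemma card_compl_eq (hv : NC v) :
    Fintype.card {p // ¬ Sp v a p} = Fintype.card {p // ¬ Tp v a p} := by
  have h := Fintype.card_congr (eST a hv)
  rw [Fintype.card_subtype_compl, Fintype.card_subtype_compl, h]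

/-- the permutation associated to a generator -/
noncomputable def sigma (hv : NC v) : Equiv.Perm (Fin (v.length + 1)) :=
  (Equiv.sumCompl (Sp v a)).symm.trans
    (((eST a hv).sumCongr (Fintype.equivOfCardEq (card_compl_eq a hv))).trans
      (Equiv.sumCompl (Tp v a)))

lemma sigma_apply_of_pos (hv : NC v) {p : Fin (v.length + 1)} (hp : Sp v a p) :
    sigma a hv p = ((fwd a ⟨p, hp⟩).1 : Fin (v.length+1)) := by
  unfold sigma
  rw [Equiv.trans_apply, Equiv.trans_apply, Equiv.sumCompl_symm_apply_of_pos hp]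
  rfl

lemma sigma_up (hv : NC v) (i : ℕ) (hi : i + 1 < v.length + 1) (h : v[i]? = some (a, true)) :
    sigma a hv ⟨i, by omega⟩ = ⟨i+1, hi⟩ := by
  have hp : Sp v a ⟨i, by omega⟩ := Or.inl h
  rw [sigma_apply_of_pos a hv hp]
  apply Fin.ext
  rw [fwd_val]
  exact if_pos h

lemma sigma_down (hv : NC v) (i : ℕ) (hi : i + 1 < v.length + 1)
    (h : v[i]? = some (a, false)) :
    sigma a hv ⟨i+1, hi⟩ = ⟨i, by omega⟩ := by
  have hp : Sp v a ⟨i+1, hi⟩ := Or.inr ⟨Nat.succ_ne_zero _, by simp only [Nat.add_sub_cancel]; exact h⟩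
  rw [sigma_apply_of_pos a hv hp]
  apply Fin.ext
  rw [fwd_val]
  have hnc : ¬(v[(i+1:ℕ)]? = some (a, true)) := by
    intro htrue
    exact hv i a false ⟨h, htrue⟩
  rw [if_neg hnc]
  simp


variable (v)

/-- product of permutations along the first `n` letters moves `0` to `n`. -/
lemma prod_take (hv : NC v) (n : ℕ) (hn : n ≤ v.length) :
    (((v.take n).map
        (fun c => bif c.2 then sigma c.1 hv else (sigma c.1 hv)⁻¹)).reverse).prod
      ⟨0, by omega⟩ = ⟨n, by omega⟩ := by
  induction n with
  | zero => simp
  | succ n ih =>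
    have hn' : n < v.length := by omega
    have hsome : v[n]? = some v[n] := List.getElem?_eq_getElem hn'
    rw [List.take_succ, hsome]
    simp only [Option.toList_some, List.map_append, List.map_cons, List.map_nil,
      List.reverse_append, List.reverse_cons, List.reverse_nil, List.nil_append,
      List.cons_append, List.prod_cons]
    rw [Equiv.Perm.mul_apply, ih (by omega)]
    rcases e : v[n] with ⟨a, b⟩
    rw [e] at hsome
    cases b
    · show (sigma a hv)⁻¹ ⟨n, _⟩ = _
      have hd := sigma_down a hv n (by omega) hsome
      rw [Equiv.Perm.inv_def, Equiv.symm_apply_eq, hd]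
    · show sigma a hv ⟨n, _⟩ = _
      exact sigma_up a hv n (by omega) hsome

lemma lift_eq_prod {G : Type*} [Group G] (F : β → G) (y : FreeGroup β) :
    FreeGroup.lift F y = ((y.toWord).map (fun c => bif c.2 then F c.1 else (F c.1)⁻¹)).prod := by
  conv_lhs => rw [← FreeGroup.mk_toWord (x := y)]
  exact FreeGroup.lift_mk

/-- Residual finiteness: every nontrivial element of a free group survives in
a finite permutation group. -/
theorem exists_perm_hom (x : FreeGroup β) (hx : x ≠ 1) :
    ∃ (n : ℕ) (f : FreeGroup β →* Equiv.Perm (Fin n)), f x ≠ 1 := by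
  have hv : NC (x.toWord).reverse := nc_reverse_toWord x
  refine ⟨(x.toWord).reverse.length + 1, FreeGroup.lift (fun a => sigma a hv), ?_⟩
  have hL : (x.toWord).reverse.length ≠ 0 := by
    rw [List.length_reverse]
    intro h
    exact hx (FreeGroup.toWord_eq_nil_iff.mp (List.length_eq_zero_iff.mp h))
  intro hone
  have h1 := fun (F : β → Equiv.Perm (Fin ((x.toWord).reverse.length + 1))) =>
    lift_eq_prod F x
  have h2 : (x.toWord).map (fun c => bif c.2 then sigma c.1 hv else (sigma c.1 hv)⁻¹)
      = (((x.toWord).reverse.map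
          (fun c => bif c.2 then sigma c.1 hv else (sigma c.1 hv)⁻¹)).reverse) := by
    rw [List.map_reverse, List.reverse_reverse]
  have h3 := prod_take (x.toWord).reverse hv (x.toWord).reverse.length le_rfl
  rw [List.take_length] at h3
  have h4 : (⟨0, by omega⟩ : Fin ((x.toWord).reverse.length + 1))
      = (⟨(x.toWord).reverse.length, by omega⟩ : Fin ((x.toWord).reverse.length + 1)) := by
    rw [← h3, ← h2]
    have h5 := h1 (fun a => sigma a hv)
    rw [hone] at h5
    rw [← h5]
    rfl
  simp only [Fin.mk.injEq] at h4
  exact hL h4.symm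

end KStab

/-- Free groups of finite rank are Hopfian. -/
theorem KStab.freeGroup_hopfian {β : Type} [Finite β] (ψ : FreeGroup β →* FreeGroup β)
    (hs : Function.Surjective ψ) : Function.Injective ψ := by
  classical
  rw [injective_iff_map_eq_one ψ]
  intro x hx
  by_contra hx1
  obtain ⟨n, f, hf⟩ := exists_perm_hom x hx1
  haveI : Finite (FreeGroup β →* Equiv.Perm (Fin n)) :=
    Finite.of_equiv _ (FreeGroup.lift (β := Equiv.Perm (Fin n)))
  have hinj : Function.Injective
      (fun g : FreeGroup β →* Equiv.Perm (Fin n) => g.comp ψ) := by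
    intro g1 g2 h
    apply MonoidHom.ext
    intro y
    obtain ⟨z, rfl⟩ := hs y
    exact DFunLike.congr_fun h z
  obtain ⟨g, hg⟩ := Finite.injective_iff_surjective.mp hinj f
  apply hf
  rw [← hg]
  show g (ψ x) = 1
  rw [hx, map_one]

namespace KStab

/-- A free group surjected by a free group of finite rank has smaller finite rank. -/
theorem card_le_of_surjective {α β : Type} [Finite α]
    (f : FreeGroup α →* FreeGroup β) (hf : Function.Surjective f) :
    Finite β ∧ Nat.card β ≤ Nat.card α := by
  classical
  set π : FreeGroup β →* Multiplicative (β →₀ ℤ) :=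
    FreeGroup.lift (fun b => Multiplicative.ofAdd (Finsupp.single b 1)) with hπdef
  have hπs : Function.Surjective π := by
    have key : ∀ z : β →₀ ℤ, ∃ w, π w = Multiplicative.ofAdd z := by
      intro z
      induction z using Finsupp.induction with
      | zero => exact ⟨1, by simp⟩
      | single_add a b g hg hb ih =>
        obtain ⟨w, hw⟩ := ih
        refine ⟨FreeGroup.of a ^ b * w, ?_⟩
        rw [map_mul, map_zpow, hw, hπdef, FreeGroup.lift_apply_of,
          ← ofAdd_zsmul, Finsupp.smul_single, smul_eq_mul, mul_one, ← ofAdd_add]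
    intro y
    exact key y
  set τ := π.comp f with hτdef
  have hτ : Function.Surjective τ := hπs.comp hf
  have hτlift : τ = FreeGroup.lift (fun a => τ (FreeGroup.of a)) := by
    apply FreeGroup.ext_hom
    intro a
    rw [FreeGroup.lift_apply_of]
  have hcl : Subgroup.closure (Set.range fun a => τ (FreeGroup.of a)) = ⊤ := by
    rw [← FreeGroup.range_lift_eq_closure, ← hτlift]
    exact MonoidHom.range_eq_top.mpr hτ
  set s : Set (β →₀ ℤ) := Set.range (fun a => Multiplicative.toAdd (τ (FreeGroup.of a))) with hsdef
  have haddcl : AddSubgroup.closure s = ⊤ := by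
    rw [AddSubgroup.eq_top_iff']
    intro x
    have hx : Multiplicative.ofAdd x ∈
        Subgroup.closure (Set.range fun a => τ (FreeGroup.of a)) := by
      rw [hcl]; trivial
    refine Subgroup.closure_induction ?_ ?_ ?_ ?_ hx
      (p := fun y _ => Multiplicative.toAdd y ∈ AddSubgroup.closure s)
    · rintro y ⟨a, rfl⟩
      exact AddSubgroup.subset_closure ⟨a, rfl⟩
    · exact AddSubgroup.zero_mem _
    · intro y z _ _ hy hz
      exact AddSubgroup.add_mem _ hy hz
    · intro y _ hy
      exact AddSubgroup.neg_mem _ hy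
  have hspan : Submodule.span ℤ s = ⊤ := by
    have h2 := Submodule.span_int_eq_addSubgroupClosure s
    rw [haddcl] at h2
    rw [Submodule.eq_top_iff']
    intro x
    show x ∈ (Submodule.span ℤ s).toAddSubgroup
    rw [h2]
    trivial
  have hrank : (Cardinal.mk β) ≤ Cardinal.mk α := by
    calc (Cardinal.mk β) = Module.rank ℤ (β →₀ ℤ) := (rank_finsupp_self' ℤ).symm
      _ = Module.rank ℤ (⊤ : Submodule ℤ (β →₀ ℤ)) := (rank_top ℤ _).symm
      _ = Module.rank ℤ (Submodule.span ℤ s) := by rw [hspan]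
      _ ≤ Cardinal.mk s := rank_span_le s
      _ ≤ Cardinal.mk α := Cardinal.mk_range_le
  have hα : (Cardinal.mk α) < Cardinal.aleph0 := Cardinal.mk_lt_aleph0_iff.mpr ‹_›
  have hβ : Finite β := Cardinal.mk_lt_aleph0_iff.mp (hrank.trans_lt hα)
  refine ⟨hβ, ?_⟩
  exact Cardinal.toNat_le_toNat hrank hα

open IsFreeGroup in
/-- For a finitely generated free group, the cardinality of a basis equals the rank. -/
theorem generators_card (H : Type) [Group H] [IsFreeGroup H] [Group.FG H] :
    Finite (Generators H) ∧ Nat.card (Generators H) = Group.rank H := by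
  classical
  obtain ⟨S, hScard, hScl⟩ := Group.rank_spec H
  have hus : Function.Surjective (FreeGroup.lift (Subtype.val : {x // x ∈ S} → H)) := by
    rw [← MonoidHom.range_eq_top, FreeGroup.range_lift_eq_closure]
    rw [Subtype.range_val]
    exact hScl
  have hu2 : Function.Surjective
      ((toFreeGroup H).toMonoidHom.comp (FreeGroup.lift (Subtype.val : {x // x ∈ S} → H))) := by
    intro y
    obtain ⟨z, hz⟩ := hus ((toFreeGroup H).symm y)
    exact ⟨z, by simp [hz]⟩
  obtain ⟨hfin, hle⟩ := card_le_of_surjective _ hu2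
  have hSc : Nat.card {x // x ∈ S} = Group.rank H := by
    rw [Nat.card_eq_fintype_card, Fintype.card_coe, hScard]
  refine ⟨hfin, le_antisymm (by rw [← hSc]; exact hle) ?_⟩
  haveI := hfin
  haveI : Fintype (Generators H) := Fintype.ofFinite _
  set T : Finset H := Finset.univ.image (fun γ => (toFreeGroup H).symm (FreeGroup.of γ))
    with hTdef
  have hTcl : Subgroup.closure (T : Set H) = ⊤ := by
    have h1 : (T : Set H) = Set.range (fun γ => (toFreeGroup H).symm (FreeGroup.of γ)) := by
      rw [hTdef]
      simp
    have h2 : Set.range (fun γ => (toFreeGroup H).symm (FreeGroup.of γ))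
        = (⇑(toFreeGroup H).symm.toMonoidHom) '' (Set.range FreeGroup.of) := by
      rw [← Set.range_comp]
      rfl
    rw [h1, h2, ← MonoidHom.map_closure (toFreeGroup H).symm.toMonoidHom,
      FreeGroup.closure_range_of]
    exact Subgroup.map_top_of_surjective _ (MulEquiv.surjective _)
  calc Group.rank H ≤ T.card := Group.rank_le hTcl
    _ ≤ Fintype.card (Generators H) := (Finset.card_image_le).trans (by rw [Finset.card_univ])
    _ = Nat.card (Generators H) := (Nat.card_eq_fintype_card).symm

end KStab

open KStab in
theorem kernels_stabilize (m : ℕ) (φ : Monoid.End (FreeGroup (Fin m))) :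
    ∃ k : ℕ, 0 < k ∧ ∀ n : ℕ, k ≤ n → MonoidHom.ker (φ ^ k) = MonoidHom.ker (φ ^ n) := by
  classical
  have hpow_succ : ∀ (n : ℕ) (x : FreeGroup (Fin m)), (φ ^ (n+1) : Monoid.End (FreeGroup (Fin m))) x = φ ((φ ^ n : Monoid.End (FreeGroup (Fin m))) x) := by
    intro n x; rw [pow_succ']; rfl
  have hpow_succ' : ∀ (n : ℕ) (x : FreeGroup (Fin m)), (φ ^ (n+1) : Monoid.End (FreeGroup (Fin m))) x = (φ ^ n : Monoid.End (FreeGroup (Fin m))) (φ x) := by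
    intro n x; rw [pow_succ]; rfl
  have hmono : ∀ n, MonoidHom.ker (φ ^ n) ≤ MonoidHom.ker (φ ^ (n+1)) := by
    intro n x hx
    rw [MonoidHom.mem_ker] at hx ⊢
    change (φ ^ (n+1) : Monoid.End (FreeGroup (Fin m))) x = 1
    change (φ ^ n : Monoid.End (FreeGroup (Fin m))) x = 1 at hx
    rw [hpow_succ, hx, map_one]
  have hstep : ∀ j, MonoidHom.ker (φ ^ j) = MonoidHom.ker (φ ^ (j+1)) →
      MonoidHom.ker (φ ^ (j+1)) = MonoidHom.ker (φ ^ (j+2)) := by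
    intro j hj
    refine le_antisymm (hmono _) ?_
    intro x hx
    rw [MonoidHom.mem_ker] at hx ⊢
    change (φ ^ (j+1+1) : Monoid.End (FreeGroup (Fin m))) x = 1 at hx
    change (φ ^ (j+1) : Monoid.End (FreeGroup (Fin m))) x = 1
    rw [hpow_succ' (j+1) x] at hx
    have h1 : φ x ∈ MonoidHom.ker (φ ^ (j+1)) := MonoidHom.mem_ker.mpr hx
    replace h1 := hj.ge h1
    rw [hpow_succ' j x]
    exact h1
  haveI : Group.FG (FreeGroup (Fin m)) := by
    rw [Group.fg_iff]
    exact ⟨Set.range FreeGroup.of, FreeGroup.closure_range_of _, Set.finite_range _⟩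
  set H : ℕ → Subgroup (FreeGroup (Fin m)) := fun n => MonoidHom.range (φ ^ n) with hHdef
  have hFG : ∀ n, Group.FG (H n) :=
    fun n => Group.fg_of_surjective ((φ ^ n).rangeRestrict_surjective)
  set r : ℕ → ℕ := fun n => @Group.rank _ _ (hFG n) with hrdef
  have hHsucc : ∀ n, Subgroup.map (φ : Monoid.End (FreeGroup (Fin m))) (H n) = H (n+1) := by
    intro n
    have e : (φ : Monoid.End (FreeGroup (Fin m))).comp (φ ^ n)
        = (φ ^ (n+1) : Monoid.End (FreeGroup (Fin m))) := by
      rw [pow_succ']; rfl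
    show Subgroup.map _ (MonoidHom.range (φ ^ n)) = MonoidHom.range (φ ^ (n+1))
    rw [← e]; exact (MonoidHom.range_comp _ _).symm
  set ψ : ∀ n, (H n) →* (H (n+1)) := fun n =>
    (MulEquiv.subgroupCongr (hHsucc n)).toMonoidHom.comp
      ((φ : Monoid.End (FreeGroup (Fin m))).subgroupMap (H n)) with hψdef
  have hψs : ∀ n, Function.Surjective (ψ n) := by
    intro n y
    obtain ⟨z, hz⟩ := (φ : Monoid.End (FreeGroup (Fin m))).subgroupMap_surjective (H n)
      ((MulEquiv.subgroupCongr (hHsucc n)).symm y)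
    exact ⟨z, by simp [hψdef, hz]⟩
  have hanti : ∀ n, r (n+1) ≤ r n := fun n =>
    @Group.rank_le_of_surjective _ _ _ _ (hFG n) (hFG (n+1)) (ψ n) (hψs n)
  have hex : ∃ n, r (n+1) = r n := by
    by_contra hc
    push_neg at hc
    have hlt : ∀ n, r (n+1) < r n := fun n => lt_of_le_of_ne (hanti n) (hc n)
    have hsum : ∀ n, r n + n ≤ r 0 := by
      intro n; induction n with
      | zero => simp
      | succ k ih => have := hlt k; omega
    have := hsum (r 0 + 1); omega
  obtain ⟨n, hr⟩ := hex
  haveI := hFG n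
  haveI := hFG (n+1)
  obtain ⟨hf1, hc1⟩ := generators_card (H n)
  obtain ⟨hf2, hc2⟩ := generators_card (H (n+1))
  haveI := hf1
  haveI := hf2
  haveI : Fintype (IsFreeGroup.Generators (H n)) := Fintype.ofFinite _
  haveI : Fintype (IsFreeGroup.Generators (H (n+1))) := Fintype.ofFinite _
  have hcards : Fintype.card (IsFreeGroup.Generators (H n))
      = Fintype.card (IsFreeGroup.Generators (H (n+1))) := by
    rw [← Nat.card_eq_fintype_card, ← Nat.card_eq_fintype_card, hc1, hc2]
    exact hr.symm
  set en := Fintype.equivOfCardEq hcards with hendef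
  set A := IsFreeGroup.toFreeGroup (H n) with hAdef
  set B := IsFreeGroup.toFreeGroup (H (n+1)) with hBdef
  set χ : FreeGroup (IsFreeGroup.Generators (H n)) →* FreeGroup (IsFreeGroup.Generators (H n)) :=
    (FreeGroup.freeGroupCongr en).symm.toMonoidHom.comp
      (B.toMonoidHom.comp ((ψ n).comp A.symm.toMonoidHom)) with hχdef
  have hχs : Function.Surjective χ := by
    intro y
    obtain ⟨z, hz⟩ := hψs n (B.symm (FreeGroup.freeGroupCongr en y))
    refine ⟨A z, ?_⟩
    show (FreeGroup.freeGroupCongr en).symm (B (ψ n (A.symm (A z)))) = y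
    rw [MulEquiv.symm_apply_apply, hz, MulEquiv.apply_symm_apply, MulEquiv.symm_apply_apply]
  have hχi := freeGroup_hopfian χ hχs
  have hψinj : Function.Injective (ψ n) := by
    intro y z h
    apply A.injective
    apply hχi
    show (FreeGroup.freeGroupCongr en).symm (B (ψ n (A.symm (A y))))
      = (FreeGroup.freeGroupCongr en).symm (B (ψ n (A.symm (A z))))
    rw [MulEquiv.symm_apply_apply, MulEquiv.symm_apply_apply, h]
  have hker : MonoidHom.ker (φ ^ n) = MonoidHom.ker (φ ^ (n+1)) := by
    refine le_antisymm (hmono n) ?_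
    intro x hx
    change (φ ^ (n+1) : Monoid.End (FreeGroup (Fin m))) x = 1 at hx
    change (φ ^ n : Monoid.End (FreeGroup (Fin m))) x = 1
    have hy : (φ ^ n) x ∈ H n := ⟨x, rfl⟩
    have h1 : ψ n ⟨(φ ^ n) x, hy⟩ = 1 := by
      apply Subtype.ext
      show ((ψ n ⟨(φ ^ n) x, hy⟩ : H (n+1)) : FreeGroup (Fin m)) = 1
      have e : ((ψ n ⟨(φ ^ n) x, hy⟩ : H (n+1)) : FreeGroup (Fin m)) = φ ((φ ^ n) x) := rfl
      rw [e, ← hpow_succ, hx]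
    have h2 := hψinj (h1.trans (map_one (ψ n)).symm)
    exact congr_arg Subtype.val h2
  -- propagate the equality of kernels
  have hconsd : ∀ d, MonoidHom.ker (φ ^ (n+d)) = MonoidHom.ker (φ ^ (n+d+1)) := by
    intro d
    induction d with
    | zero => exact hker
    | succ k ih => exact hstep (n+k) ih
  have hcons : ∀ j, n ≤ j → MonoidHom.ker (φ ^ j) = MonoidHom.ker (φ ^ (j+1)) := by
    intro j hj
    obtain ⟨d, rfl⟩ := Nat.exists_eq_add_of_le hj
    exact hconsd d
  refine ⟨n+1, Nat.succ_pos n, ?_⟩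
  intro n' hn'
  induction n' with
  | zero => omega
  | succ k ih =>
    rcases Nat.lt_or_ge (n+1) (k+1) with h | h
    · have hk : n+1 ≤ k := by omega
      rw [ih hk]
      exact hcons k (by omega)
    · have : n+1 = k+1 := by omega
      rw [this]
end

section
/- Every finitely generated free group is Hopfian, i.e., every surjective endomorphism of a finitely generated free group is injective. -/
open FreeGroup

namespace FGHopf

open scoped Classical

variable {β : Type*} [DecidableEq β]

/-- A word is "nice" (reduced-like) if it has no adjacent inverse pair. -/
def Nice (L : List (β × Bool)) : Prop :=
  ∀ i (h : i + 1 < L.length) (a : β) (b : Bool),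
    L[i]'(by omega) = (a, b) → L[i+1]'h ≠ (a, !b)

theorem nice_toWord (w : FreeGroup β) : Nice w.toWord := by
  intro i h a b h1 h2
  have hL : w.toWord = w.toWord.take i ++ (a, b) :: (a, !b) :: w.toWord.drop (i + 2) := by
    conv_lhs => rw [← List.take_append_drop i w.toWord]
    congr 1
    rw [List.drop_eq_getElem_cons (by omega : i < w.toWord.length), h1,
      List.drop_eq_getElem_cons (l := w.toWord) (i := i + 1) (by omega), h2]
  have hred := w.reduce_toWord
  rw [hL] at hred
  exact FreeGroup.reduce.not hred

variable (L : List (β × Bool)) (a : β)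

def P (x : Fin (L.length + 1)) : Prop :=
  (∃ h : (x : ℕ) < L.length, L[(x : ℕ)]'h = (a, false)) ∨
  (∃ h : 0 < (x : ℕ), L[(x : ℕ) - 1]'(by omega) = (a, true))

def Q (y : Fin (L.length + 1)) : Prop :=
  (∃ h : 0 < (y : ℕ), L[(y : ℕ) - 1]'(by omega) = (a, false)) ∨
  (∃ h : (y : ℕ) < L.length, L[(y : ℕ)]'h = (a, true))

theorem getElem_idx_congr {γ : Type*} (M : List γ) {i j : ℕ} (hij : i = j)
    (hj : j < M.length) : M[i]'(hij ▸ hj) = M[j]'hj := by subst hij; rfl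

noncomputable def fwd : { x // P L a x } → { y // Q L a y }
  | ⟨⟨x, hxlt⟩, hx⟩ =>
    if h : ∃ h : x < L.length, L[x]'h = (a, false) then
      ⟨⟨x + 1, by have := h.choose; omega⟩,
        Or.inl ⟨Nat.succ_pos x, h.choose_spec⟩⟩
    else
      have h2 : ∃ h : 0 < x, L[x - 1]'(by omega) = (a, true) := hx.resolve_left h
      ⟨⟨x - 1, by omega⟩,
        Or.inr ⟨by have := h2.choose; show x - 1 < L.length; omega, h2.choose_spec⟩⟩

noncomputable def bwd : { y // Q L a y } → { x // P L a x }
  | ⟨⟨y, hylt⟩, hy⟩ =>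
    if h : ∃ h : 0 < y, L[y - 1]'(by omega) = (a, false) then
      ⟨⟨y - 1, by omega⟩,
        Or.inl ⟨by have := h.choose; show y - 1 < L.length; omega, h.choose_spec⟩⟩
    else
      have h2 : ∃ h : y < L.length, L[y]'h = (a, true) := hy.resolve_left h
      ⟨⟨y + 1, by have := h2.choose; omega⟩,
        Or.inr ⟨Nat.succ_pos y, h2.choose_spec⟩⟩

variable (hN : Nice L)

include hN in
theorem bwd_fwd (x : { x // P L a x }) : bwd L a (fwd L a x) = x := by
  obtain ⟨⟨x, hxlt⟩, hx⟩ := x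
  by_cases h : ∃ h : x < L.length, L[x]'h = (a, false)
  · simp only [fwd]; rw [dif_pos h]
    have hcond : ∃ hh : 0 < ((⟨x + 1, by have := h.choose; omega⟩ : Fin (L.length + 1)) : ℕ),
        L[((⟨x + 1, by have := h.choose; omega⟩ : Fin (L.length + 1)) : ℕ) - 1]'(by omega)
          = (a, false) := ⟨Nat.succ_pos x, h.choose_spec⟩
    simp only [bwd]; rw [dif_pos hcond]
    rfl
  · simp only [fwd]; rw [dif_neg h]
    have h2 : ∃ h : 0 < x, L[x - 1]'(by omega) = (a, true) := hx.resolve_left h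
    have hx0 : 0 < x := h2.choose
    have hxL : L[x - 1]'(by omega) = (a, true) := h2.choose_spec
    have hcond : ¬ ∃ hh : 0 < ((⟨x - 1, by omega⟩ : Fin (L.length + 1)) : ℕ),
        L[((⟨x - 1, by omega⟩ : Fin (L.length + 1)) : ℕ) - 1]'(by omega) = (a, false) := by
      rintro ⟨hh0, hhL⟩
      have hh0' : 0 < x - 1 := hh0
      have hhL' : L[x - 1 - 1]'(by omega) = (a, false) := hhL
      have hstep : x - 1 - 1 + 1 = x - 1 := by omega
      refine hN (x - 1 - 1) (by omega) a false hhL' ?_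
      rw [getElem_idx_congr L hstep (by omega)]
      exact hxL
    simp only [bwd]; rw [dif_neg hcond]
    refine Subtype.ext (Fin.ext ?_)
    show x - 1 + 1 = x
    omega

include hN in
theorem fwd_bwd (y : { y // Q L a y }) : fwd L a (bwd L a y) = y := by
  obtain ⟨⟨y, hylt⟩, hy⟩ := y
  by_cases h : ∃ h : 0 < y, L[y - 1]'(by omega) = (a, false)
  · simp only [bwd]; rw [dif_pos h]
    have hy0 : 0 < y := h.choose
    have hcond : ∃ hh : ((⟨y - 1, by omega⟩ : Fin (L.length + 1)) : ℕ) < L.length,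
        L[((⟨y - 1, by omega⟩ : Fin (L.length + 1)) : ℕ)]'hh = (a, false) :=
      ⟨by show y - 1 < L.length; omega, h.choose_spec⟩
    simp only [fwd]; rw [dif_pos hcond]
    refine Subtype.ext (Fin.ext ?_)
    show y - 1 + 1 = y
    omega
  · simp only [bwd]; rw [dif_neg h]
    have h2 : ∃ h : y < L.length, L[y]'h = (a, true) := hy.resolve_left h
    have hyL : y < L.length := h2.choose
    have hyv : L[y]'hyL = (a, true) := h2.choose_spec
    have hcond : ¬ ∃ hh : ((⟨y + 1, by have := h2.choose; omega⟩ : Fin (L.length + 1)) : ℕ)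
          < L.length,
        L[((⟨y + 1, by have := h2.choose; omega⟩ : Fin (L.length + 1)) : ℕ)]'hh = (a, false) := by
      rintro ⟨hh0, hhL⟩
      exact hN y hh0 a true hyv hhL
    simp only [fwd]; rw [dif_neg hcond]
    rfl

/-- The partial shift equivalence for the letter `a`. -/
noncomputable def myEquiv : { x // P L a x } ≃ { y // Q L a y } where
  toFun := fwd L a
  invFun := bwd L a
  left_inv := bwd_fwd L a hN
  right_inv := fwd_bwd L a hN

/-- The permutation associated to the letter `a`. -/
noncomputable def sigma : Equiv.Perm (Fin (L.length + 1)) :=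
  (myEquiv L a hN).extendSubtype

theorem sigma_ff {x : ℕ} (hx : x < L.length) (hL : L[x]'hx = (a, false)) :
    sigma L a hN ⟨x, by omega⟩ = ⟨x + 1, by omega⟩ := by
  have hp : P L a ⟨x, by omega⟩ := Or.inl ⟨hx, hL⟩
  rw [sigma, Equiv.extendSubtype_apply_of_mem (myEquiv L a hN) _ hp]
  show ((fwd L a ⟨⟨x, by omega⟩, hp⟩ : { y // Q L a y }) : Fin (L.length + 1)) = _
  simp only [fwd]
  rw [dif_pos (⟨hx, hL⟩ : ∃ h : x < L.length, L[x]'h = (a, false))]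

theorem sigma_tt {x : ℕ} (hx : x < L.length) (hL : L[x]'hx = (a, true)) :
    sigma L a hN ⟨x + 1, by omega⟩ = ⟨x, by omega⟩ := by
  have hp : P L a ⟨x + 1, by omega⟩ := Or.inr ⟨Nat.succ_pos x, hL⟩
  rw [sigma, Equiv.extendSubtype_apply_of_mem (myEquiv L a hN) _ hp]
  show ((fwd L a ⟨⟨x + 1, by omega⟩, hp⟩ : { y // Q L a y }) : Fin (L.length + 1)) = _
  have hcond : ¬ ∃ h : x + 1 < L.length, L[x + 1]'h = (a, false) := by
    rintro ⟨hh, hhL⟩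
    exact hN x hh a true hL hhL
  simp only [fwd]
  rw [dif_neg hcond]
  rfl

theorem word_prod (hN : Nice L) :
    ∀ d j (hj : j + d = L.length),
      (((L.drop j).map fun x => cond x.2 (sigma L x.1 hN) (sigma L x.1 hN)⁻¹).prod)
        ⟨L.length, by omega⟩ = ⟨j, by omega⟩ := by
  intro d
  induction d with
  | zero =>
    intro j hj
    have hj' : j = L.length := by omega
    subst hj'
    rw [List.drop_eq_nil_of_le le_rfl]
    rfl
  | succ d ih =>
    intro j hj
    have hjL : j < L.length := by omega
    rw [List.drop_eq_getElem_cons hjL]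
    simp only [List.map_cons, List.prod_cons, Equiv.Perm.mul_apply]
    rw [ih (j + 1) (by omega)]
    rcases Bool.eq_false_or_eq_true (L[j]'hjL).2 with hb | hb
    · have hL : L[j]'hjL = ((L[j]'hjL).1, true) := by
        rw [← hb]
      rw [hL]
      simp only [cond_true]
      exact sigma_tt L (L[j]'hjL).1 hN hjL hL
    · have hL : L[j]'hjL = ((L[j]'hjL).1, false) := by
        rw [← hb]
      rw [hL]
      simp only [cond_false]
      have h1 := sigma_ff L (L[j]'hjL).1 hN hjL hL
      rw [← h1, ← Equiv.Perm.mul_apply, inv_mul_cancel, Equiv.Perm.one_apply]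

/-- Residual finiteness of free groups: every nontrivial element survives in a
finite (symmetric group) quotient. -/
theorem free_group_separated (g : FreeGroup β) (hg : g ≠ 1) :
    ∃ ψ : FreeGroup β →* Equiv.Perm (Fin (g.toWord.length + 1)), ψ g ≠ 1 := by
  set L := g.toWord with hLdef
  have hN : Nice L := nice_toWord g
  refine ⟨FreeGroup.lift fun a => sigma L a hN, ?_⟩
  intro hone
  have hmk : FreeGroup.mk L = g := FreeGroup.mk_toWord
  have hlen : L.length ≠ 0 := by
    intro h0
    exact hg (FreeGroup.toWord_eq_nil_iff.mp (List.length_eq_zero_iff.mp h0))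
  have hcalc := word_prod L hN L.length 0 (by omega)
  rw [List.drop_zero] at hcalc
  have heval : (FreeGroup.lift fun a => sigma L a hN) g =
      ((L.map fun x => cond x.2 (sigma L x.1 hN) (sigma L x.1 hN)⁻¹).prod) := by
    rw [← hmk, FreeGroup.lift_mk]
  rw [hone] at heval
  have h2 : (⟨L.length, by omega⟩ : Fin (L.length + 1)) = ⟨0, by omega⟩ := by
    rw [← hcalc, ← heval]
    rfl
  exact hlen (congrArg Fin.val h2)

end FGHopf

theorem free_group_hopfian (n : ℕ) (φ : FreeGroup (Fin n) →* FreeGroup (Fin n))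
    (hsurj : Function.Surjective φ) : Function.Injective φ := by
  rw [injective_iff_map_eq_one]
  intro g hg1
  by_contra hg
  obtain ⟨ψ, hψ⟩ := FGHopf.free_group_separated g hg
  set K := Equiv.Perm (Fin (g.toWord.length + 1)) with hK
  have : Finite (FreeGroup (Fin n) →* K) := by
    have hinj : Function.Injective
        (fun (f : FreeGroup (Fin n) →* K) => (f ∘ FreeGroup.of : Fin n → K)) := by
      intro f1 f2 h
      exact FreeGroup.ext_hom f1 f2 fun x => congrFun h x
    exact Finite.of_injective _ hinj
  have hcomp_inj : Function.Injective
      (fun (f : FreeGroup (Fin n) →* K) => f.comp φ) := by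
    intro f1 f2 h
    apply MonoidHom.ext
    intro x
    obtain ⟨y, rfl⟩ := hsurj x
    exact DFunLike.congr_fun h y
  have hcomp_surj := Finite.surjective_of_injective hcomp_inj
  obtain ⟨χ, hχ⟩ := hcomp_surj ψ
  apply hψ
  calc ψ g = χ (φ g) := by rw [← hχ]; rfl
  _ = χ 1 := by rw [hg1]
  _ = 1 := map_one χ
end

section
/- Let φ : G → G be an endomorphism of a group G, let N be a normal φ-invariant subgroup contained in the kernel of the canonical map G → M(φ), and let φ̄ : G/N → G/N be the induced endomorphism. Then M(φ) ≅ M(φ̄). -/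
open Monoid

/-- The mapping torus `M(φ) = ⟨G, t | t⁻¹ g t = φ(g)⟩` of an endomorphism `φ : G → G`. -/
def mappingTorus {G : Type*} [Group G] (φ : G →* G) : Type _ :=
  Coprod G (Multiplicative ℤ) ⧸ Subgroup.normalClosure
    {x | ∃ g : G, x = (Coprod.inr (Multiplicative.ofAdd (1 : ℤ)))⁻¹ * Coprod.inl g *
      Coprod.inr (Multiplicative.ofAdd (1 : ℤ)) * (Coprod.inl (φ g))⁻¹}

instance {G : Type*} [Group G] (φ : G →* G) : Group (mappingTorus φ) := by
  unfold mappingTorus; infer_instance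

/-- The canonical homomorphism `G → M(φ)`. -/
def mappingTorus.ofBase {G : Type*} [Group G] (φ : G →* G) : G →* mappingTorus φ :=
  (QuotientGroup.mk' _).comp Coprod.inl

/-- The stable letter `t ∈ M(φ)`. -/
def mappingTorus.t {G : Type*} [Group G] (φ : G →* G) : mappingTorus φ :=
  QuotientGroup.mk' _ (Coprod.inr (Multiplicative.ofAdd (1 : ℤ)))

lemma mappingTorus.rel {G : Type*} [Group G] (φ : G →* G) (g : G) :
    (mappingTorus.t φ)⁻¹ * mappingTorus.ofBase φ g * mappingTorus.t φ =
      mappingTorus.ofBase φ (φ g) := by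
  have h : QuotientGroup.mk' (Subgroup.normalClosure
      {x : Coprod G (Multiplicative ℤ) | ∃ g : G,
        x = (Coprod.inr (Multiplicative.ofAdd (1 : ℤ)))⁻¹ * Coprod.inl g *
          Coprod.inr (Multiplicative.ofAdd (1 : ℤ)) * (Coprod.inl (φ g))⁻¹})
      ((Coprod.inr (Multiplicative.ofAdd (1 : ℤ)))⁻¹ * Coprod.inl g *
        Coprod.inr (Multiplicative.ofAdd (1 : ℤ)) * (Coprod.inl (φ g))⁻¹) = 1 :=
    (QuotientGroup.eq_one_iff _).2 (Subgroup.subset_normalClosure ⟨g, rfl⟩)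
  simp only [map_mul, map_inv] at h
  have := mul_inv_eq_one.mp h
  exact this

/-- The universal property: a hom out of the mapping torus. -/
def mappingTorus.lift {G H : Type*} [Group G] [Group H] (φ : G →* G) (f : G →* H) (u : H)
    (hrel : ∀ g : G, u⁻¹ * f g * u = f (φ g)) : mappingTorus φ →* H :=
  QuotientGroup.lift _ (Coprod.lift f (zpowersHom H u)) (by
    intro x hx
    refine (Subgroup.normalClosure_le_normal ?_ hx : x ∈ (Coprod.lift f (zpowersHom H u)).ker)
    rintro y ⟨g, rfl⟩
    have : (Coprod.lift f (zpowersHom H u))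
        ((Coprod.inr (Multiplicative.ofAdd (1 : ℤ)))⁻¹ * Coprod.inl g *
          Coprod.inr (Multiplicative.ofAdd (1 : ℤ)) * (Coprod.inl (φ g))⁻¹) = 1 := by
      simp only [map_mul, map_inv, Coprod.lift_apply_inl, Coprod.lift_apply_inr,
        zpowersHom_apply]
      rw [mul_inv_eq_one]
      simpa using hrel g
    exact this)

@[simp] lemma mappingTorus.lift_ofBase {G H : Type*} [Group G] [Group H] (φ : G →* G)
    (f : G →* H) (u : H) (hrel : ∀ g : G, u⁻¹ * f g * u = f (φ g)) (g : G) :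
    mappingTorus.lift φ f u hrel (mappingTorus.ofBase φ g) = f g := by
  show QuotientGroup.lift _ _ _ (QuotientGroup.mk (Coprod.inl g)) = f g
  rw [QuotientGroup.lift_mk]
  simp

@[simp] lemma mappingTorus.lift_t {G H : Type*} [Group G] [Group H] (φ : G →* G)
    (f : G →* H) (u : H) (hrel : ∀ g : G, u⁻¹ * f g * u = f (φ g)) :
    mappingTorus.lift φ f u hrel (mappingTorus.t φ) = u := by
  show QuotientGroup.lift _ _ _ (QuotientGroup.mk (Coprod.inr _)) = u
  rw [QuotientGroup.lift_mk]
  simp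

lemma mappingTorus.hom_ext {G H : Type*} [Group G] [Group H] {φ : G →* G}
    {f₁ f₂ : mappingTorus φ →* H} (hbase : ∀ g, f₁ (ofBase φ g) = f₂ (ofBase φ g))
    (ht : f₁ (t φ) = f₂ (t φ)) : f₁ = f₂ := by
  apply QuotientGroup.monoidHom_ext
  apply Coprod.hom_ext
  · ext g; exact hbase g
  · apply MonoidHom.ext_mint; exact ht

theorem mappingTorus_iso_quotient {G : Type*} [Group G] (φ : G →* G) (N : Subgroup G)
    [N.Normal] (hinv : ∀ g ∈ N, φ g ∈ N) (hker : N ≤ (mappingTorus.ofBase φ).ker) :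
    Nonempty (mappingTorus φ ≃* mappingTorus (QuotientGroup.map N N φ (fun g hg => hinv g hg))) := by
  set ψ := QuotientGroup.map N N φ (fun g hg => hinv g hg) with hψ
  have hψmk : ∀ g : G, ψ (QuotientGroup.mk g) = QuotientGroup.mk (φ g) := fun g => rfl
  -- forward map
  let fwd : mappingTorus φ →* mappingTorus ψ :=
    mappingTorus.lift φ ((mappingTorus.ofBase ψ).comp (QuotientGroup.mk' N))
      (mappingTorus.t ψ) (fun g => by
        simpa [hψmk] using mappingTorus.rel ψ (QuotientGroup.mk g))
  -- backward base map
  let b : G ⧸ N →* mappingTorus φ := QuotientGroup.lift N (mappingTorus.ofBase φ) hker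
  let bwd : mappingTorus ψ →* mappingTorus φ :=
    mappingTorus.lift ψ b (mappingTorus.t φ) (by
      intro x
      obtain ⟨g, rfl⟩ := QuotientGroup.mk_surjective x
      simpa [b, hψmk] using mappingTorus.rel φ g)
  refine ⟨MonoidHom.toMulEquiv fwd bwd ?_ ?_⟩
  · apply mappingTorus.hom_ext
    · intro g; simp [fwd, bwd, b]
    · simp [fwd, bwd]
  · apply mappingTorus.hom_ext
    · intro x
      obtain ⟨g, rfl⟩ := QuotientGroup.mk_surjective x
      simp [fwd, bwd, b, mappingTorus.ofBase]
      rfl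
    · simp [fwd, bwd]
end

section
/- Let φ be an endomorphism of a group G and N = ker(φ^k) where ker(φ^k) = ker(φ^n) for all n ≥ k. Then the kernel of the canonical homomorphism G → M(φ) contains N. -/
open Monoid

lemma mappingTorus.conj_rel {G : Type*} [Group G] (φ : G →* G) (g : G) :
    mappingTorus.ofBase φ g =
      mappingTorus.t φ * mappingTorus.ofBase φ (φ g) * (mappingTorus.t φ)⁻¹ := by
  have h : QuotientGroup.mk' (Subgroup.normalClosure
      {x | ∃ g : G, x = (Coprod.inr (Multiplicative.ofAdd (1 : ℤ)))⁻¹ * Coprod.inl g *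
        Coprod.inr (Multiplicative.ofAdd (1 : ℤ)) * (Coprod.inl (φ g))⁻¹})
      ((Coprod.inr (Multiplicative.ofAdd (1 : ℤ)))⁻¹ * Coprod.inl g *
        Coprod.inr (Multiplicative.ofAdd (1 : ℤ)) * (Coprod.inl (φ g))⁻¹) = 1 := by
    rw [QuotientGroup.mk'_apply, QuotientGroup.eq_one_iff]
    exact Subgroup.subset_normalClosure ⟨g, rfl⟩
  simp only [map_mul, map_inv] at h
  have h' : (mappingTorus.t φ)⁻¹ * mappingTorus.ofBase φ g * mappingTorus.t φ *
      (mappingTorus.ofBase φ (φ g))⁻¹ = 1 := h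
  calc mappingTorus.ofBase φ g
      = mappingTorus.t φ * ((mappingTorus.t φ)⁻¹ * mappingTorus.ofBase φ g *
          mappingTorus.t φ * (mappingTorus.ofBase φ (φ g))⁻¹) *
          mappingTorus.ofBase φ (φ g) * (mappingTorus.t φ)⁻¹ := by group
    _ = _ := by rw [h']; group

instance mappingTorus.instGroupEnd {G : Type*} [Group G] (φ : Monoid.End G) :
    Group (mappingTorus (φ : G →* G)) :=
  instGroupMappingTorus (φ : G →* G)

lemma mappingTorus.conj_pow {G : Type*} [Group G] (φ : Monoid.End G) (g : G) (n : ℕ) :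
    mappingTorus.ofBase (φ : G →* G) g =
      (mappingTorus.t (φ : G →* G)) ^ n * mappingTorus.ofBase (φ : G →* G) ((φ ^ n) g) *
        ((mappingTorus.t (φ : G →* G)) ^ n)⁻¹ := by
  induction n generalizing g with
  | zero => simp
  | succ n ih =>
    have h1 : (φ ^ (n + 1)) g = (φ ^ n) (φ g) := by
      rw [pow_succ]; rfl
    rw [h1, mappingTorus.conj_rel (φ : G →* G) g, pow_succ']
    refine (congrArg (fun y => mappingTorus.t (φ : G →* G) * y *
      (mappingTorus.t (φ : G →* G))⁻¹) (ih (φ g))).trans ?_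
    group

theorem stable_kernel_le_ker_ofBase {G : Type*} [Group G] (φ : Monoid.End G) (k : ℕ)
    (hk : 0 < k) (hstab : ∀ n : ℕ, k ≤ n → MonoidHom.ker (φ ^ k) = MonoidHom.ker (φ ^ n)) :
    MonoidHom.ker (φ ^ k) ≤
      @MonoidHom.ker _ _ _ (instGroupMappingTorus (φ : G →* G)).toMonoid.toMulOneClass
        (mappingTorus.ofBase (φ : G →* G)) := by
  intro g hg
  have hg1 : (φ ^ k) g = 1 := hg
  have := mappingTorus.conj_pow φ g k
  rw [hg1, map_one, mul_one] at this
  simp [MonoidHom.mem_ker, this]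
end

section
/- If φ : F → F is an endomorphism of a finitely generated free group with ker(φ^k) = ker(φ^{k+1}), then the induced injective endomorphism φ̄ of F/ker(φ^k) satisfies: M(φ) is an ascending HNN extension of a finitely generated free group, hence F/ker(φ^k) embeds in M(φ). -/
open Monoid

instance instGroupMappingTorusEnd {G : Type*} [Group G] (φ : Monoid.End G) :
    Group (@mappingTorus G _ φ) := instGroupMappingTorus φ


namespace MTColim

variable {G : Type*} [Group G] (φ : Monoid.End G)

lemma pow_apply_add (a b : ℕ) (x : G) : (φ ^ (a + b)) x = (φ ^ a) ((φ ^ b) x) := by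
  rw [pow_add]; rfl

/-- Raising levels. -/
lemma raise {n p q : ℤ} (hnp : n ≤ p) (hpq : p ≤ q) (x : G) :
    (φ ^ (q - n).toNat) x = (φ ^ (q - p).toNat) ((φ ^ (p - n).toNat) x) := by
  rw [← pow_apply_add]
  have h : (q - p).toNat + (p - n).toNat = (q - n).toNat := by omega
  rw [h]

def Rel : ℤ × G → ℤ × G → Prop := fun a b =>
  ∃ p, a.1 ≤ p ∧ b.1 ≤ p ∧ (φ ^ (p - a.1).toNat) a.2 = (φ ^ (p - b.1).toNat) b.2

lemma rel_eval {a b : ℤ × G} (h : Rel φ a b) : ∃ p, a.1 ≤ p ∧ b.1 ≤ p ∧ ∀ q, p ≤ q →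
    (φ ^ (q - a.1).toNat) a.2 = (φ ^ (q - b.1).toNat) b.2 := by
  obtain ⟨p, hap, hbp, he⟩ := h
  exact ⟨p, hap, hbp, fun q hpq => by
    rw [raise φ hap hpq, raise φ hbp hpq, he]⟩

lemma rel_refl (a : ℤ × G) : Rel φ a a := ⟨a.1, le_refl _, le_refl _, rfl⟩

lemma rel_symm {a b : ℤ × G} (h : Rel φ a b) : Rel φ b a := by
  obtain ⟨p, h1, h2, h3⟩ := h; exact ⟨p, h2, h1, h3.symm⟩

lemma rel_trans {a b c : ℤ × G} (h1 : Rel φ a b) (h2 : Rel φ b c) : Rel φ a c := by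
  obtain ⟨p, hap, hbp, he⟩ := rel_eval φ h1
  obtain ⟨r, hbr, hcr, he'⟩ := rel_eval φ h2
  refine ⟨max p r, le_trans hap (le_max_left _ _), le_trans hcr (le_max_right _ _), ?_⟩
  rw [he _ (le_max_left _ _), he' _ (le_max_right _ _)]

def setoid : Setoid (ℤ × G) where
  r := Rel φ
  iseqv := ⟨rel_refl φ, rel_symm φ, rel_trans φ⟩

def Colim := Quotient (setoid φ)

def mk (a : ℤ × G) : Colim φ := Quotient.mk (setoid φ) a

lemma mk_eq_mk {a b : ℤ × G} (h : Rel φ a b) : mk φ a = mk φ b := Quotient.sound h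

lemma mk_raise {n q : ℤ} (h : n ≤ q) (x : G) :
    mk φ (n, x) = mk φ (q, (φ ^ (q - n).toNat) x) := by
  refine mk_eq_mk φ ⟨q, h, le_refl _, ?_⟩
  simp

private def mulRep (a b : ℤ × G) : ℤ × G :=
  (max a.1 b.1, (φ ^ (max a.1 b.1 - a.1).toNat) a.2 * (φ ^ (max a.1 b.1 - b.1).toNat) b.2)

lemma mulRep_eval {a b : ℤ × G} {q : ℤ} (ha : a.1 ≤ q) (hb : b.1 ≤ q) :
    (φ ^ (q - (mulRep φ a b).1).toNat) (mulRep φ a b).2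
      = (φ ^ (q - a.1).toNat) a.2 * (φ ^ (q - b.1).toNat) b.2 := by
  have h1 : a.1 ≤ max a.1 b.1 := le_max_left _ _
  have h2 : b.1 ≤ max a.1 b.1 := le_max_right _ _
  have h3 : max a.1 b.1 ≤ q := max_le ha hb
  simp only [mulRep, map_mul]
  rw [← raise φ h1 h3, ← raise φ h2 h3]

instance : Mul (Colim φ) where
  mul := Quotient.map₂ (mulRep φ) (by
    rintro a a' haa' b b' hbb'
    obtain ⟨p, hap, ha'p, he⟩ := rel_eval φ haa'
    obtain ⟨r, hbr, hb'r, he'⟩ := rel_eval φ hbb'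
    set q := max p r with hq
    have hpq : p ≤ q := le_max_left _ _
    have hrq : r ≤ q := le_max_right _ _
    have haq : a.1 ≤ q := le_trans hap hpq
    have hbq : b.1 ≤ q := le_trans hbr hrq
    have ha'q : a'.1 ≤ q := le_trans ha'p hpq
    have hb'q : b'.1 ≤ q := le_trans hb'r hrq
    refine ⟨q, max_le haq hbq, max_le ha'q hb'q, ?_⟩
    rw [mulRep_eval φ haq hbq, mulRep_eval φ ha'q hb'q, he _ hpq, he' _ hrq])

lemma mul_mk (a b : ℤ × G) : mk φ a * mk φ b = mk φ (mulRep φ a b) := rfl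

lemma mul_mk_eval {n m q : ℤ} (hn : n ≤ q) (hm : m ≤ q) (x y : G) :
    mk φ (n, x) * mk φ (m, y) = mk φ (q, (φ ^ (q - n).toNat) x * (φ ^ (q - m).toNat) y) := by
  rw [mul_mk]
  refine mk_eq_mk φ ⟨q, max_le hn hm, le_refl _, ?_⟩
  rw [mulRep_eval φ hn hm]
  simp

instance : One (Colim φ) := ⟨mk φ (0, 1)⟩

lemma one_def : (1 : Colim φ) = mk φ (0, 1) := rfl

lemma one_mk (q : ℤ) : (1 : Colim φ) = mk φ (q, 1) := by
  rcases le_or_gt 0 q with h | h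
  · rw [one_def, mk_raise φ h, map_one]
  · rw [one_def]
    refine (mk_eq_mk φ ⟨0, h.le, le_refl _, ?_⟩).symm
    rw [map_one, map_one]

instance : Inv (Colim φ) where
  inv := Quotient.map (fun a => (a.1, a.2⁻¹)) (by
    rintro a b ⟨p, h1, h2, h3⟩
    exact ⟨p, h1, h2, by rw [map_inv, map_inv, h3]⟩)

lemma inv_mk (a : ℤ × G) : (mk φ a)⁻¹ = mk φ (a.1, a.2⁻¹) := rfl

instance : Group (Colim φ) where
  mul_assoc a b c := by
    induction a using Quotient.ind
    induction b using Quotient.ind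
    induction c using Quotient.ind
    rename_i a b c
    obtain ⟨n, x⟩ := a; obtain ⟨m, y⟩ := b; obtain ⟨l, z⟩ := c
    set q := max n (max m l) with hq
    have hn : n ≤ q := le_max_left _ _
    have hm : m ≤ q := le_max_of_le_right (le_max_left _ _)
    have hl : l ≤ q := le_max_of_le_right (le_max_right _ _)
    show mk φ (n,x) * mk φ (m,y) * mk φ (l,z) = mk φ (n,x) * (mk φ (m,y) * mk φ (l,z))
    rw [mul_mk_eval φ hn hm, mul_mk_eval φ (le_refl q) hl,
        mul_mk_eval φ hm hl, mul_mk_eval φ hn (le_refl q)]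
    simp [mul_assoc]
  one_mul a := by
    induction a using Quotient.ind
    rename_i a; obtain ⟨n, x⟩ := a
    show (1 : Colim φ) * mk φ (n, x) = mk φ (n, x)
    rw [one_mk φ n, mul_mk_eval φ (le_refl n) (le_refl n)]
    simp
  mul_one a := by
    induction a using Quotient.ind
    rename_i a; obtain ⟨n, x⟩ := a
    show mk φ (n, x) * (1 : Colim φ) = mk φ (n, x)
    rw [one_mk φ n, mul_mk_eval φ (le_refl n) (le_refl n)]
    simp
  inv_mul_cancel a := by
    induction a using Quotient.ind
    rename_i a; obtain ⟨n, x⟩ := a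
    show (mk φ (n, x))⁻¹ * mk φ (n, x) = 1
    rw [inv_mk, mul_mk_eval φ (le_refl n) (le_refl n), one_mk φ n]
    simp

/-- The canonical map at level 0. -/
def ofLevelZero : G →* Colim φ where
  toFun g := mk φ (0, g)
  map_one' := (one_mk φ 0).symm
  map_mul' x y := by
    rw [mul_mk_eval φ (le_refl (0:ℤ)) (le_refl (0:ℤ))]
    simp

/-- Shift homomorphisms. -/
def shift (j : ℤ) : Colim φ →* Colim φ where
  toFun := Quotient.map (fun a => (a.1 + j, a.2)) (by
    rintro ⟨n, x⟩ ⟨m, y⟩ ⟨p, h1, h2, h3⟩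
    show Rel φ (n + j, x) (m + j, y)
    simp only at h1 h2
    refine ⟨p + j, by omega, by omega, ?_⟩
    simp only at h3 ⊢
    have e1 : p + j - (n + j) = p - n := by omega
    have e2 : p + j - (m + j) = p - m := by omega
    rw [e1, e2]; exact h3)
  map_one' := by
    show mk φ (0 + j, 1) = 1
    rw [one_mk φ (0 + j)]
  map_mul' a b := by
    induction a using Quotient.ind
    induction b using Quotient.ind
    rename_i a b
    obtain ⟨n, x⟩ := a; obtain ⟨m, y⟩ := b
    show mk φ ((mulRep φ (n,x) (m,y)).1 + j, (mulRep φ (n,x) (m,y)).2)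
      = mk φ (n + j, x) * mk φ (m + j, y)
    rw [mul_mk_eval φ (q := max n m + j) (by omega) (by omega)]
    have e0 : (mulRep φ (n,x) (m,y)).1 + j = max n m + j := rfl
    have e1 : max n m + j - (n + j) = max n m - n := by omega
    have e2 : max n m + j - (m + j) = max n m - m := by omega
    rw [e0, e1, e2]
    rfl

lemma shift_mk (j : ℤ) (a : ℤ × G) : shift φ j (mk φ a) = mk φ (a.1 + j, a.2) := rfl

lemma shift_shift (i j : ℤ) (a : Colim φ) : shift φ i (shift φ j a) = shift φ (j + i) a := by
  induction a using Quotient.ind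
  rename_i a
  show mk φ (a.1 + j + i, a.2) = mk φ (a.1 + (j + i), a.2)
  rw [add_assoc]

lemma shift_zero (a : Colim φ) : shift φ 0 a = a := by
  induction a using Quotient.ind
  rename_i a
  show mk φ (a.1 + 0, a.2) = mk φ a
  rw [add_zero]

def shiftEquiv (j : ℤ) : Colim φ ≃* Colim φ where
  toFun := shift φ j
  invFun := shift φ (-j)
  left_inv a := by rw [shift_shift]; simp only [add_neg_cancel]; exact shift_zero φ a
  right_inv a := by rw [shift_shift]; simp only [neg_add_cancel]; exact shift_zero φ a
  map_mul' := map_mul _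

end MTColim

namespace MTColim

variable {G : Type*} [Group G] (φ : Monoid.End G)

/-- The action of `ℤ` on the colimit by shifting. -/
def act : Multiplicative ℤ →* MulAut (Colim φ) where
  toFun z := shiftEquiv φ (Multiplicative.toAdd z)
  map_one' := by
    ext a
    exact shift_zero φ a
  map_mul' a b := by
    ext x
    show shift φ _ x = shift φ _ (shift φ _ x)
    rw [shift_shift]
    have e : Multiplicative.toAdd b + Multiplicative.toAdd a = Multiplicative.toAdd (a * b) :=
      add_comm _ _
    rw [e]

lemma act_apply (z : Multiplicative ℤ) (x : Colim φ) :
    act φ z x = shift φ (Multiplicative.toAdd z) x := rfl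

lemma act_neg_one (g : G) :
    act φ ((Multiplicative.ofAdd (1 : ℤ))⁻¹) (ofLevelZero φ g) = ofLevelZero φ (φ g) := by
  rw [act_apply]
  have e : Multiplicative.toAdd ((Multiplicative.ofAdd (1 : ℤ))⁻¹) = -1 := rfl
  rw [e]
  have e2 : shift φ (-1) (ofLevelZero φ g) = mk φ (0 + -1, g) := rfl
  rw [e2]
  have e3 : (0 : ℤ) + -1 = -1 := by norm_num
  rw [e3]
  show mk φ (-1, g) = mk φ (0, φ g)
  rw [mk_raise φ (by norm_num : (-1 : ℤ) ≤ 0) g]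
  norm_num

/-- The homomorphism from the free product to the semidirect product. -/
def bigHom : Coprod G (Multiplicative ℤ) →* (Colim φ ⋊[act φ] Multiplicative ℤ) :=
  Coprod.lift (SemidirectProduct.inl.comp (ofLevelZero φ)) SemidirectProduct.inr

/-- The homomorphism from the mapping torus to the semidirect product. -/
def torusHom : mappingTorus (φ : G →* G) →* (Colim φ ⋊[act φ] Multiplicative ℤ) :=
  QuotientGroup.lift _ (bigHom φ) (fun x hx => by
    refine MonoidHom.mem_ker.mp (Subgroup.normalClosure_le_normal ?_ hx)
    rintro y ⟨g, rfl⟩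
    rw [SetLike.mem_coe, MonoidHom.mem_ker]
    simp only [map_mul, map_inv, bigHom, Coprod.lift_apply_inl, Coprod.lift_apply_inr,
      MonoidHom.coe_comp, Function.comp_apply]
    have key : (SemidirectProduct.inr (Multiplicative.ofAdd (1:ℤ)))⁻¹
        * SemidirectProduct.inl (ofLevelZero φ g)
        * SemidirectProduct.inr (Multiplicative.ofAdd (1:ℤ))
        = (SemidirectProduct.inl (act φ (Multiplicative.ofAdd (1:ℤ))⁻¹ (ofLevelZero φ g)) :
            Colim φ ⋊[act φ] Multiplicative ℤ) := by
      rw [SemidirectProduct.inl_aut, map_inv, inv_inv]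
    rw [mul_assoc, mul_assoc, ← mul_assoc, ← mul_assoc, key, act_neg_one]
    exact mul_inv_cancel _)

lemma torusHom_ofBase (g : G) :
    torusHom φ (mappingTorus.ofBase (φ : G →* G) g) = SemidirectProduct.inl (ofLevelZero φ g) :=
  rfl

lemma ofLevelZero_eq_one_iff (g : G) :
    ofLevelZero φ g = 1 ↔ ∃ p : ℕ, (φ ^ p) g = 1 := by
  constructor
  · intro h
    have h' : mk φ (0, g) = mk φ (0, 1) := h.trans (one_mk φ 0)
    obtain ⟨p, hp, -, he⟩ := Quotient.exact h'
    rw [map_one] at he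
    exact ⟨_, he⟩
  · rintro ⟨p, hp⟩
    show mk φ (0, g) = 1
    rw [mk_raise φ (Int.natCast_nonneg p) g, one_mk φ (p : ℤ)]
    have e : ((p : ℤ) - 0).toNat = p := by omega
    rw [e, hp]

/-- The relator subgroup. -/
def NC : Subgroup (Coprod G (Multiplicative ℤ)) := Subgroup.normalClosure
  {x | ∃ g : G, x = (Coprod.inr (Multiplicative.ofAdd (1 : ℤ)))⁻¹ * Coprod.inl g *
    Coprod.inr (Multiplicative.ofAdd (1 : ℤ)) * (Coprod.inl ((φ : G →* G) g))⁻¹}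

instance : (NC φ).Normal := by unfold NC; infer_instance

lemma ofBase_apply (x : G) :
    mappingTorus.ofBase (φ : G →* G) x = QuotientGroup.mk' (NC φ) (Coprod.inl x) := rfl

lemma t_def :
    mappingTorus.t (φ : G →* G)
      = QuotientGroup.mk' (NC φ) (Coprod.inr (Multiplicative.ofAdd (1 : ℤ))) := rfl

/-- In the mapping torus, `ofBase (φ g) = t⁻¹ * ofBase g * t`. -/
lemma ofBase_phi (g : G) :
    mappingTorus.ofBase (φ : G →* G) (φ g)
      = (mappingTorus.t (φ : G →* G))⁻¹ * mappingTorus.ofBase (φ : G →* G) g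
        * mappingTorus.t (φ : G →* G) := by
  have main : (QuotientGroup.mk' (NC φ) (Coprod.inl (φ g)) :
      Coprod G (Multiplicative ℤ) ⧸ NC φ)
      = (QuotientGroup.mk' (NC φ) (Coprod.inr (Multiplicative.ofAdd (1 : ℤ))))⁻¹
        * QuotientGroup.mk' (NC φ) (Coprod.inl g)
        * QuotientGroup.mk' (NC φ) (Coprod.inr (Multiplicative.ofAdd (1 : ℤ))) := by
    rw [← map_inv, ← map_mul, ← map_mul, QuotientGroup.mk'_eq_mk']
    refine ⟨(Coprod.inl ((φ : G →* G) g))⁻¹ * ((Coprod.inr (Multiplicative.ofAdd (1 : ℤ)))⁻¹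
      * Coprod.inl g * Coprod.inr (Multiplicative.ofAdd (1 : ℤ))), ?_, by group⟩
    have hr : (Coprod.inr (M := G) (Multiplicative.ofAdd (1 : ℤ)))⁻¹ * Coprod.inl g *
      Coprod.inr (Multiplicative.ofAdd (1 : ℤ)) * (Coprod.inl ((φ : G →* G) g))⁻¹ ∈
      Subgroup.normalClosure
        {x | ∃ g : G, x = (Coprod.inr (Multiplicative.ofAdd (1 : ℤ)))⁻¹ * Coprod.inl g *
          Coprod.inr (Multiplicative.ofAdd (1 : ℤ)) * (Coprod.inl ((φ : G →* G) g))⁻¹} :=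
      Subgroup.subset_normalClosure ⟨g, rfl⟩
    have hc := Subgroup.Normal.conj_mem (Subgroup.normalClosure_normal) _ hr
      (Coprod.inl ((φ : G →* G) g))⁻¹
    have key : (Coprod.inl ((φ : G →* G) g))⁻¹ * ((Coprod.inr (M := G)
      (Multiplicative.ofAdd (1 : ℤ)))⁻¹ * Coprod.inl g *
      Coprod.inr (Multiplicative.ofAdd (1 : ℤ)))
      = (Coprod.inl ((φ : G →* G) g))⁻¹ * ((Coprod.inr (M := G)
        (Multiplicative.ofAdd (1 : ℤ)))⁻¹ * Coprod.inl g *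
        Coprod.inr (Multiplicative.ofAdd (1 : ℤ)) * (Coprod.inl ((φ : G →* G) g))⁻¹)
        * ((Coprod.inl ((φ : G →* G) g))⁻¹)⁻¹ := by group
    rw [key]
    exact hc
  exact main

lemma ofBase_pow_eq_one (j : ℕ) (g : G) (h : mappingTorus.ofBase (φ : G →* G) ((φ ^ j) g) = 1) :
    mappingTorus.ofBase (φ : G →* G) g = 1 := by
  induction j generalizing g with
  | zero => simpa using h
  | succ n ih =>
    have e : (φ ^ n) (φ g) = (φ ^ (n + 1)) g := by
      rw [pow_apply_add φ n 1, pow_one]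
    have h1 : mappingTorus.ofBase (φ : G →* G) ((φ ^ n) (φ g)) = 1 := by
      rw [e]; exact h
    have h2 := ih (φ g) h1
    rw [ofBase_phi] at h2
    have h3 : mappingTorus.ofBase (φ : G →* G) g
        = mappingTorus.t (φ : G →* G) * ((mappingTorus.t (φ : G →* G))⁻¹
          * mappingTorus.ofBase (φ : G →* G) g * mappingTorus.t (φ : G →* G))
          * (mappingTorus.t (φ : G →* G))⁻¹ := by group
    rw [h3, h2]
    group

end MTColim

open MTColim in
theorem quotient_embeds_in_mappingTorus (m : ℕ) (φ : Monoid.End (FreeGroup (Fin m))) (k : ℕ)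
    (hstab : MonoidHom.ker (φ ^ k) = MonoidHom.ker (φ ^ (k + 1)))
    (hinv : ∀ g ∈ MonoidHom.ker (φ ^ k), (φ : FreeGroup (Fin m) →* FreeGroup (Fin m)) g ∈ MonoidHom.ker (φ ^ k)) :
    Function.Injective
        (QuotientGroup.map (MonoidHom.ker (φ ^ k)) (MonoidHom.ker (φ ^ k))
          (φ : FreeGroup (Fin m) →* FreeGroup (Fin m)) (fun g hg => hinv g hg)) ∧
      ∃ f : @MonoidHom (FreeGroup (Fin m) ⧸ MonoidHom.ker (φ ^ k))
          (mappingTorus (φ : FreeGroup (Fin m) →* FreeGroup (Fin m))) _ (instGroupMappingTorus _).toMulOne,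
        Function.Injective f := by
  have hker_mono : ∀ a b : ℕ, a ≤ b → MonoidHom.ker (φ ^ a) ≤ MonoidHom.ker (φ ^ b) := by
    intro a b hab g hg
    erw [MonoidHom.mem_ker] at hg ⊢
    have e : b - a + a = b := by omega
    have : (φ ^ b) g = (φ ^ (b - a)) ((φ ^ a) g) := by
      rw [← pow_apply_add, e]
    erw [this, hg, map_one]
  have hker_stab : ∀ j : ℕ, MonoidHom.ker (φ ^ (k + j)) = MonoidHom.ker (φ ^ k) := by
    intro j
    induction j with
    | zero => rfl
    | succ n ih =>
      refine le_antisymm ?_ (hker_mono k (k + (n + 1)) (by omega))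
      intro g hg
      erw [MonoidHom.mem_ker] at hg
      have e : k + 1 + n = k + (n + 1) := by omega
      have h1 : (φ ^ (k + 1)) ((φ ^ n) g) = 1 := by
        rw [← pow_apply_add, e]; exact hg
      have h2 : (φ ^ n) g ∈ MonoidHom.ker (φ ^ (k + 1)) := h1
      erw [← hstab, MonoidHom.mem_ker] at h2
      have h3 : g ∈ MonoidHom.ker (φ ^ (k + n)) := by
        erw [MonoidHom.mem_ker, pow_apply_add]; exact h2
      rw [ih] at h3
      exact h3
  constructor
  · rw [injective_iff_map_eq_one]
    intro a ha
    obtain ⟨g, rfl⟩ := QuotientGroup.mk_surjective a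
    erw [QuotientGroup.map_mk, QuotientGroup.eq_one_iff] at ha
    rw [QuotientGroup.eq_one_iff]
    erw [MonoidHom.mem_ker] at ha ⊢
    have h1 : (φ ^ (k + 1)) g = 1 := by
      rw [pow_apply_add, pow_one]; exact ha
    have h2 : g ∈ MonoidHom.ker (φ ^ (k + 1)) := h1
    rw [← hstab] at h2
    exact h2
  · have hbase : ∀ g ∈ MonoidHom.ker (φ ^ k),
        mappingTorus.ofBase (φ : FreeGroup (Fin m) →* FreeGroup (Fin m)) g = 1 := by
      intro g hg
      erw [MonoidHom.mem_ker] at hg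
      exact ofBase_pow_eq_one φ k g (by erw [hg, map_one])
    refine ⟨QuotientGroup.lift _ (mappingTorus.ofBase (φ : FreeGroup (Fin m) →* FreeGroup (Fin m)))
      hbase, ?_⟩
    rw [injective_iff_map_eq_one]
    intro a ha
    obtain ⟨g, rfl⟩ := QuotientGroup.mk_surjective a
    erw [QuotientGroup.lift_mk] at ha
    have h1 : torusHom φ (mappingTorus.ofBase (φ : FreeGroup (Fin m) →* FreeGroup (Fin m)) g)
        = 1 := by rw [ha, map_one]
    rw [torusHom_ofBase] at h1
    have h2 : ofLevelZero φ g = 1 := by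
      refine SemidirectProduct.inl_injective (φ := act φ) ?_
      rw [h1, map_one]
    rw [ofLevelZero_eq_one_iff] at h2
    obtain ⟨p, hp⟩ := h2
    have hmem : g ∈ MonoidHom.ker (φ ^ p) := hp
    have hmem2 : g ∈ MonoidHom.ker (φ ^ (k + p)) := hker_mono p (k + p) (by omega) hmem
    rw [hker_stab p] at hmem2
    rw [QuotientGroup.eq_one_iff]
    exact hmem2
end
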